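/- The function f₃(x) = e^{3x}(x+2) + e^{2x}(−4x−10) + e^{x}(15x+2) + 6 is nonnegative for all real x. -/

import Mathlib

open Real

private lemma chain_nonneg (F G : ℝ → ℝ) (hd : ∀ x, HasDerivAt F (G x) x)
    (h0 : F 0 = 0) (hG : ∀ x, 0 ≤ x → 0 ≤ G x) : ∀ x, 0 ≤ x → 0 ≤ F x := by
  intro x hx
  have hm : MonotoneOn F (Set.Ici 0) := by
    apply monotoneOn_of_deriv_nonneg (convex_Ici 0)
    · exact fun y _ => ((hd y).differentiableAt.continuousAt).continuousWithinAt
    · intro y _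
      exact (hd y).differentiableAt.differentiableWithinAt
    · intro y hy
      rw [(hd y).deriv]
      rw [interior_Ici] at hy
      exact hG y (le_of_lt hy)
  have h := hm Set.self_mem_Ici hx hx
  rw [h0] at h
  exact h

private lemma lem_k' : ∀ x : ℝ, 0 ≤ x → 0 ≤ x * Real.exp x - Real.exp x + 1 := by
  apply chain_nonneg _ (fun x => x * Real.exp x)
  · intro x
    have he := Real.hasDerivAt_exp x
    have := ((hasDerivAt_id' x).mul he).sub he |>.add_const 1
    exact this.congr_deriv (by ring)
  · simp
  · intro x hx
    exact mul_nonneg hx (Real.exp_pos x).le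

private lemma lem_k : ∀ x : ℝ, 0 ≤ x → 0 ≤ x * (Real.exp x + 1) - 2 * Real.exp x + 2 := by
  apply chain_nonneg _ (fun x => x * Real.exp x - Real.exp x + 1)
  · intro x
    have he := Real.hasDerivAt_exp x
    have := ((hasDerivAt_id' x).mul (he.add_const 1)).sub (he.const_mul 2) |>.add_const 2
    exact this.congr_deriv (by ring)
  · simp
  · exact lem_k'

private lemma lem_g' : ∀ x : ℝ, 0 ≤ x →
    0 ≤ 2 * x * Real.exp x ^ 2 + 4 * x * Real.exp x - 5 * Real.exp x ^ 2 + 4 * Real.exp x + 1 := by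
  apply chain_nonneg _ (fun x => 4 * Real.exp x * (x * (Real.exp x + 1) - 2 * Real.exp x + 2))
  · intro x
    have he := Real.hasDerivAt_exp x
    have h2 : HasDerivAt (fun y => Real.exp y ^ 2) (2 * Real.exp x ^ 2) x := by
      simpa [pow_one, mul_assoc, sq] using he.fun_pow 2
    have := ((((hasDerivAt_id' x).const_mul 2).mul h2).add
        (((hasDerivAt_id' x).const_mul 4).mul he)).sub (h2.const_mul 5) |>.add (he.const_mul 4)
        |>.add_const 1
    exact this.congr_deriv (by ring)
  · norm_num
  · intro x hx
    exact mul_nonneg (by positivity) (lem_k x hx)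

private lemma lem_g : ∀ x : ℝ, 0 ≤ x →
    0 ≤ x * (Real.exp x ^ 2 + 4 * Real.exp x + 1) - 3 * Real.exp x ^ 2 + 3 := by
  apply chain_nonneg _
    (fun x => 2 * x * Real.exp x ^ 2 + 4 * x * Real.exp x - 5 * Real.exp x ^ 2 + 4 * Real.exp x + 1)
  · intro x
    have he := Real.hasDerivAt_exp x
    have h2 : HasDerivAt (fun y => Real.exp y ^ 2) (2 * Real.exp x ^ 2) x := by
      simpa [pow_one, mul_assoc, sq] using he.fun_pow 2
    have := ((hasDerivAt_id' x).mul ((h2.add (he.const_mul 4)).add_const 1)).sub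
        (h2.const_mul 3) |>.add_const 3
    exact this.congr_deriv (by simp only [Pi.add_apply]; ring)
  · norm_num
  · exact lem_g'

private lemma lem_h' : ∀ y : ℝ, 0 ≤ y →
    0 ≤ 2 * Real.exp y ^ 2 - 4 * y * Real.exp y - 2 := by
  apply chain_nonneg _ (fun y => 4 * Real.exp y ^ 2 - 4 * Real.exp y - 4 * y * Real.exp y)
  · intro y
    have he := Real.hasDerivAt_exp y
    have h2 : HasDerivAt (fun z => Real.exp z ^ 2) (2 * Real.exp y ^ 2) y := by
      simpa [pow_one, mul_assoc, sq] using he.fun_pow 2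
    have := (h2.const_mul 2).sub ((((hasDerivAt_id' y).const_mul 4).mul he))
      |>.sub_const 2
    exact this.congr_deriv (by ring)
  · norm_num
  · intro y hy
    have h1 : y + 1 ≤ Real.exp y := Real.add_one_le_exp y
    nlinarith [Real.exp_pos y, sq_nonneg (Real.exp y - 1 - y)]

private lemma lem_h : ∀ y : ℝ, 0 ≤ y →
    0 ≤ Real.exp y ^ 2 + 4 * Real.exp y - 5 - 4 * y * Real.exp y - 2 * y := by
  apply chain_nonneg _ (fun y => 2 * Real.exp y ^ 2 - 4 * y * Real.exp y - 2)
  · intro y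
    have he := Real.hasDerivAt_exp y
    have h2 : HasDerivAt (fun z => Real.exp z ^ 2) (2 * Real.exp y ^ 2) y := by
      simpa [pow_one, mul_assoc, sq] using he.fun_pow 2
    have := ((h2.add (he.const_mul 4)).sub_const 5).sub
        (((hasDerivAt_id' y).const_mul 4).mul he) |>.sub ((hasDerivAt_id' y).const_mul 2)
    exact this.congr_deriv (by ring)
  · norm_num
  · exact lem_h'

theorem f3_nonneg :
    ∀ x : ℝ, 0 ≤ Real.exp (3*x) * (x + 2) + Real.exp (2*x) * (-4*x - 10)
      + Real.exp x * (15*x + 2) + 6 := by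
  intro x
  set u := Real.exp x with hu
  have hupos : 0 < u := Real.exp_pos x
  have h2 : Real.exp (2*x) = u ^ 2 := by rw [two_mul, Real.exp_add]; ring
  have h3 : Real.exp (3*x) = u ^ 3 := by
    rw [show (3:ℝ)*x = x + x + x by ring, Real.exp_add, Real.exp_add]; ring
  rw [h2, h3]
  rcases le_or_gt 0 x with hx | hx
  · -- positive case
    have hkey := lem_g x hx
    have hu1 : 1 ≤ u := Real.one_le_exp hx
    have hq : 0 ≤ u * (u ^ 2 - 4 * u + 15) := by nlinarith [sq_nonneg (u - 2)]
    have h1 : 0 ≤ (x * (u ^ 2 + 4 * u + 1) - 3 * u ^ 2 + 3) * (u * (u ^ 2 - 4 * u + 15)) :=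
      mul_nonneg hkey hq
    have h2' : 0 ≤ (u - 1) ^ 4 * (5 * u + 6) := by positivity
    nlinarith [h1, h2', sq_nonneg u, hupos]
  · -- negative case
    set v := Real.exp (-x) with hv
    have hvpos : 0 < v := Real.exp_pos _
    have huv : u * v = 1 := by rw [hu, hv, ← Real.exp_add]; simp
    have hv1 : 1 ≤ v := Real.one_le_exp (by linarith)
    have hkey := lem_h (-x) (by linarith)
    rw [← hv] at hkey
    -- hkey : 0 ≤ v^2 + 4v - 5 - 4*(-x)*v - 2*(-x)
    have hden : (0:ℝ) < 15 * v ^ 2 - 4 * v + 1 := by nlinarith [sq_nonneg (v - 1)]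
    have h1 : 0 ≤ (v ^ 2 + 4 * v - 5 + 4 * x * v + 2 * x) * (15 * v ^ 2 - 4 * v + 1) := by
      apply mul_nonneg _ hden.le
      nlinarith [hkey]
    have hP : 0 ≤ 6 * v ^ 3 + 2 * v ^ 2 - 10 * v + 2 + x * (15 * v ^ 2 - 4 * v + 1) := by
      nlinarith [h1, pow_le_pow_left₀ (by norm_num : (0:ℝ) ≤ 1) hv1 4,
        mul_pos hvpos hvpos, sq_nonneg ((v-1)^2)]
    have key : (u ^ 3 * (x + 2) + u ^ 2 * (-4*x - 10) + u * (15*x + 2) + 6) * v ^ 3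
        = 6 * v ^ 3 + 2 * v ^ 2 - 10 * v + 2 + x * (15 * v ^ 2 - 4 * v + 1) := by
      have e3 : u ^ 3 * v ^ 3 = 1 := by
        rw [← mul_pow, huv, one_pow]
      have e2 : u ^ 2 * v ^ 2 = 1 := by
        rw [← mul_pow, huv, one_pow]
      calc (u ^ 3 * (x + 2) + u ^ 2 * (-4*x - 10) + u * (15*x + 2) + 6) * v ^ 3
          = (u^3 * v^3) * (x + 2) + (u^2 * v^2) * (v * (-4*x - 10))
            + (u * v) * (v^2 * (15*x + 2)) + 6 * v ^ 3 := by ring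
        _ = 6 * v ^ 3 + 2 * v ^ 2 - 10 * v + 2 + x * (15 * v ^ 2 - 4 * v + 1) := by
            rw [e3, e2, huv]; ring
    have hgoal : 0 ≤ (u ^ 3 * (x + 2) + u ^ 2 * (-4*x - 10) + u * (15*x + 2) + 6) * v ^ 3 := by
      rw [key]; exact hP
    have hv3 : (0:ℝ) < v ^ 3 := by positivity
    nlinarith [hgoal, hv3, mul_pos hv3 hv3]
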